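/- Let G be a noncompact, locally compact, second countable topological group in which every compactly generated open subgroup is compact, and fix an integer n ≥ 1. Then G contains a compact, symmetric (S = S⁻¹) neighborhood S of the identity e such that Sⁿ ≠ S^{n+1}, where Sᵏ denotes the k-fold product set. -/

import Mathlib

open MeasureTheory ProbabilityTheory Set
open scoped ENNReal NNReal Pointwise

noncomputable section

namespace PoissonSystems

private lemma aux_sq_le_pow (n : ℕ) : (n + 1) ^ 2 ≤ 4 ^ n := by
  induction n with
  | zero => norm_num
  | succ k ih =>
    have h1 : (k + 2) ^ 2 ≤ 4 * (k + 1) ^ 2 := by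
      rw [pow_two, pow_two]; nlinarith
    calc (k + 2) ^ 2 ≤ 4 * (k + 1) ^ 2 := h1
      _ ≤ 4 * 4 ^ k := by exact Nat.mul_le_mul_left 4 ih
      _ = 4 ^ (k + 1) := by ring

private lemma exists_big_m (n : ℕ) : ∃ m : ℕ, 0 < m ∧ (2 * m + 1) ^ n < 2 ^ m := by
  refine ⟨(2 * n + 4) * n + 1, Nat.succ_pos _, ?_⟩
  have h2 : (n + 1) ^ 2 ≤ 4 ^ n := aux_sq_le_pow n
  have hpow : 2 ^ (2 * n + 4) = 16 * 4 ^ n := by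
    rw [pow_add, pow_mul]; norm_num [mul_comm]
  have h1 : 2 * ((2 * n + 4) * n + 1) + 1 ≤ 2 ^ (2 * n + 4) := by
    rw [hpow]; nlinarith
  calc (2 * ((2 * n + 4) * n + 1) + 1) ^ n
      ≤ (2 ^ (2 * n + 4)) ^ n := Nat.pow_le_pow_left h1 n
    _ = 2 ^ ((2 * n + 4) * n) := by rw [← pow_mul]
    _ < 2 ^ ((2 * n + 4) * n + 1) := Nat.pow_lt_pow_right one_lt_two (Nat.lt_succ_self _)

/-- Counting step: if every covering of `L` by left cosets of `N` needs at least `c`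
cosets, and `g ∈ L' \ L` with `L ≤ L'`, `N ≤ L`, then every covering of `L'` needs `2*c`. -/
private lemma cover_card_step {G : Type*} [Group G] (N L L' : Subgroup G) (g : G)
    (hNL : N ≤ L) (hLL' : L ≤ L') (hg : g ∈ L') (hgn : g ∉ L) (c : ℕ)
    (IH : ∀ B : Finset G, (L : Set G) ⊆ ↑B * ↑N → c ≤ B.card) :
    ∀ B : Finset G, (L' : Set G) ⊆ ↑B * ↑N → 2 * c ≤ B.card := by
  classical
  intro B hB
  set B₁ := B.filter (fun b => b ∈ L) with hB₁def
  set B₂ := B.filter (fun b => g⁻¹ * b ∈ L) with hB₂def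
  have hdisj : Disjoint B₁ B₂ := by
    rw [Finset.disjoint_left]
    intro b hb1 hb2
    rw [hB₁def, Finset.mem_filter] at hb1
    rw [hB₂def, Finset.mem_filter] at hb2
    have hginv : g⁻¹ ∈ L := by
      have h := mul_mem hb2.2 (inv_mem hb1.2)
      simpa [mul_assoc] using h
    exact hgn (by simpa using inv_mem hginv)
  have hcov1 : (L : Set G) ⊆ ↑B₁ * ↑N := by
    intro x hx
    obtain ⟨b, hb, ν, hν, hbe⟩ := hB (hLL' hx)
    have hbe : b * ν = x := hbe
    have hbL : b ∈ L := by
      have h : x * ν⁻¹ ∈ L := mul_mem hx (inv_mem (hNL hν))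
      rwa [← hbe, mul_inv_cancel_right] at h
    refine ⟨b, ?_, ν, hν, hbe⟩
    rw [Finset.mem_coe, hB₁def, Finset.mem_filter]
    exact ⟨Finset.mem_coe.1 hb, hbL⟩
  have hcov2 : (L : Set G) ⊆ ↑(B₂.image (fun b => g⁻¹ * b)) * ↑N := by
    intro x hx
    obtain ⟨b, hb, ν, hν, hbe⟩ := hB (mul_mem hg (hLL' hx) : g * x ∈ L')
    have hbe : b * ν = g * x := hbe
    have hgb : g⁻¹ * b = x * ν⁻¹ := by
      have hb' : b = g * x * ν⁻¹ := by rw [← hbe, mul_inv_cancel_right]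
      rw [hb']; group
    have hbL : g⁻¹ * b ∈ L := by
      rw [hgb]; exact mul_mem hx (inv_mem (hNL hν))
    refine ⟨g⁻¹ * b, ?_, ν, hν, ?_⟩
    · simp only [Finset.coe_image, Set.mem_image, Finset.mem_coe]
      refine ⟨b, ?_, rfl⟩
      rw [hB₂def, Finset.mem_filter]
      exact ⟨Finset.mem_coe.1 hb, hbL⟩
    · rw [hgb]
      exact inv_mul_cancel_right x ν
  have h1 : c ≤ B₁.card := IH _ hcov1
  have h2 : c ≤ B₂.card := le_trans (IH _ hcov2) Finset.card_image_le
  calc 2 * c = c + c := by ring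
    _ ≤ B₁.card + B₂.card := Nat.add_le_add h1 h2
    _ = (B₁ ∪ B₂).card := (Finset.card_union_of_disjoint hdisj).symm
    _ ≤ B.card := Finset.card_le_card (Finset.union_subset
        (Finset.filter_subset _ _) (Finset.filter_subset _ _))

/-- **Lemma 6.1.** If every compactly generated open subgroup of a noncompact, locally
compact, second countable group is compact, then for each `n ≥ 1` the group contains a
compact symmetric neighborhood `S` of the identity with `Sⁿ ≠ S^{n+1}`. -/
theorem exists_symmetric_neighborhood_with_growing_powers
    {G : Type*} [Group G] [TopologicalSpace G] [IsTopologicalGroup G]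
    [LocallyCompactSpace G] [SecondCountableTopology G] [NoncompactSpace G]
    (hsub : ∀ H : Subgroup G, IsOpen (H : Set G) →
      (∃ K : Set G, IsCompact K ∧ Subgroup.closure K = H) → IsCompact (H : Set G))
    (n : ℕ) (hn : 1 ≤ n) :
    ∃ S : Set G, IsCompact S ∧ S = S⁻¹ ∧ S ∈ nhds (1 : G) ∧ S ^ n ≠ S ^ (n + 1) := by
  classical
  -- a first compact open subgroup
  obtain ⟨K, hKc, hKn⟩ := exists_compact_mem_nhds (1 : G)
  set H0 : Subgroup G := Subgroup.closure (K ∪ K⁻¹) with hH0def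
  have hH0nhds : (H0 : Set G) ∈ nhds (1 : G) :=
    Filter.mem_of_superset hKn (subset_union_left.trans Subgroup.subset_closure)
  have hH0open : IsOpen (H0 : Set G) := Subgroup.isOpen_of_mem_nhds H0 hH0nhds
  have hH0compact : IsCompact (H0 : Set G) :=
    hsub H0 hH0open ⟨K ∪ K⁻¹, hKc.union hKc.inv, rfl⟩
  -- the step: enlarge a compact open subgroup
  have step : ∀ H : Subgroup G, IsOpen (H : Set G) → IsCompact (H : Set G) →
      ∃ H' : Subgroup G, IsOpen (H' : Set G) ∧ IsCompact (H' : Set G) ∧ H ≤ H' ∧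
        ∃ x, x ∈ H' ∧ x ∉ H := by
    intro H ho hc
    have hne : (H : Set G) ≠ Set.univ := by
      intro h
      exact noncompact_univ G (h ▸ hc)
    obtain ⟨x, hx⟩ : ∃ x, x ∉ H := by
      by_contra h
      push_neg at h
      exact hne (Set.eq_univ_of_forall h)
    have hle : H ≤ Subgroup.closure ((H : Set G) ∪ {x}) := fun y hy =>
      Subgroup.subset_closure (Or.inl hy)
    have hopen' : IsOpen ((Subgroup.closure ((H : Set G) ∪ {x}) : Subgroup G) : Set G) :=
      Subgroup.isOpen_of_mem_nhds _
        (Filter.mem_of_superset (ho.mem_nhds (one_mem H)) hle)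
    refine ⟨Subgroup.closure ((H : Set G) ∪ {x}), hopen', ?_, hle, x, ?_, hx⟩
    · exact hsub _ hopen' ⟨(H : Set G) ∪ {x}, hc.union isCompact_singleton, rfl⟩
    · exact Subgroup.subset_closure (Or.inr rfl)
  choose F hFo hFc hFle xF hxFmem hxFnot using step
  -- the increasing chain of compact open subgroups
  let chain : ℕ → {H : Subgroup G // IsOpen (H : Set G) ∧ IsCompact (H : Set G)} := fun i =>
    Nat.rec ⟨H0, hH0open, hH0compact⟩
      (fun _ p => ⟨F p.1 p.2.1 p.2.2, hFo p.1 p.2.1 p.2.2, hFc p.1 p.2.1 p.2.2⟩) i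
  set Hs : ℕ → Subgroup G := fun i => (chain i).1 with hHsdef
  set g : ℕ → G := fun i => xF (chain i).1 (chain i).2.1 (chain i).2.2 with hgdef
  have hHopen : ∀ i, IsOpen ((Hs i : Subgroup G) : Set G) := fun i => (chain i).2.1
  have hHcompact : ∀ i, IsCompact ((Hs i : Subgroup G) : Set G) := fun i => (chain i).2.2
  have hchainsucc : ∀ i, Hs (i + 1) = F (chain i).1 (chain i).2.1 (chain i).2.2 := fun i => rfl
  have hgmem : ∀ i, g i ∈ Hs (i + 1) := fun i => hxFmem (chain i).1 (chain i).2.1 (chain i).2.2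
  have hgnot : ∀ i, g i ∉ Hs i := fun i => hxFnot (chain i).1 (chain i).2.1 (chain i).2.2
  have hHmono : Monotone Hs :=
    monotone_nat_of_le_succ (fun i => hFle (chain i).1 (chain i).2.1 (chain i).2.2)
  obtain ⟨m, hm0, hmlt⟩ := exists_big_m n
  set T : Subgroup G := Hs m with hTdef
  -- the normal core construction
  set Nc : Subgroup G :=
    { carrier := {y | ∀ t ∈ T, t⁻¹ * y * t ∈ H0}
      one_mem' := by intro t ht; simpa using one_mem H0
      mul_mem' := by
        intro a b ha hb t ht
        have : t⁻¹ * (a * b) * t = (t⁻¹ * a * t) * (t⁻¹ * b * t) := by group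
        rw [this]; exact mul_mem (ha t ht) (hb t ht)
      inv_mem' := by
        intro a ha t ht
        have : t⁻¹ * a⁻¹ * t = (t⁻¹ * a * t)⁻¹ := by group
        rw [this]; exact inv_mem (ha t ht) } with hNcdef
  have hNcmem : ∀ y : G, y ∈ Nc ↔ ∀ t ∈ T, t⁻¹ * y * t ∈ H0 := fun y => Iff.rfl
  have hH0T : H0 ≤ T := hHmono (Nat.zero_le m)
  -- finite subcover of T by cosets of H0
  have hcover : (T : Set G) ⊆ ⋃ t : T, (t : G) • (H0 : Set G) := by
    intro s hs
    exact Set.mem_iUnion.2 ⟨⟨s, hs⟩, ⟨1, one_mem H0, mul_one s⟩⟩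
  obtain ⟨Fs, hFs⟩ := (hHcompact m).elim_finite_subcover
    (fun t : T => (t : G) • (H0 : Set G))
    (fun t => hH0open.smul (t : G)) hcover
  have hNceq : (Nc : Set G) =
      ⋂ t ∈ Fs, (fun y => (t : G)⁻¹ * y * (t : G)) ⁻¹' (H0 : Set G) := by
    apply Set.Subset.antisymm
    · intro y hy
      exact Set.mem_iInter₂.2 fun t _ => hy (t : G) t.2
    · intro y hy
      intro t ht
      obtain ⟨s, hsFs, hts⟩ := Set.mem_iUnion₂.1 (hFs ht)
      obtain ⟨h, hh, hth⟩ := hts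
      simp only [smul_eq_mul] at hth
      have hy' : (s : G)⁻¹ * y * (s : G) ∈ H0 := Set.mem_iInter₂.1 hy s hsFs
      have : t⁻¹ * y * t = h⁻¹ * ((s : G)⁻¹ * y * (s : G)) * h := by
        rw [← hth]; group
      rw [this]
      exact mul_mem (mul_mem (inv_mem hh) hy') hh
  have hNcopen : IsOpen (Nc : Set G) := by
    rw [hNceq]
    refine isOpen_biInter_finset fun t _ => ?_
    exact hH0open.preimage ((continuous_const.mul continuous_id).mul continuous_const)
  have hNcle : Nc ≤ H0 := by
    intro y hy
    have := hy 1 (one_mem T)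
    simpa using this
  have hNcclosed : IsClosed (Nc : Set G) := by
    rw [hNceq]
    refine isClosed_biInter fun t _ => ?_
    exact IsClosed.preimage ((continuous_const.mul continuous_id).mul continuous_const)
      (H0.isClosed_of_isOpen hH0open)
  have hNccompact : IsCompact (Nc : Set G) :=
    hH0compact.of_isClosed_subset hNcclosed hNcle
  have hNcconj : ∀ s ∈ T, ∀ y ∈ Nc, s * y * s⁻¹ ∈ Nc := by
    intro s hs y hy t ht
    have : t⁻¹ * (s * y * s⁻¹) * t = (s⁻¹ * t)⁻¹ * y * (s⁻¹ * t) := by group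
    rw [this]
    exact hy _ (mul_mem (inv_mem hs) ht)
  -- the generating finite set
  set A : Finset G := {1} ∪ (Finset.range m).image g ∪
      (Finset.range m).image (fun i => (g i)⁻¹) with hAdef
  have hAcard : A.card ≤ 2 * m + 1 := by
    calc A.card ≤ ({1} ∪ (Finset.range m).image g : Finset G).card
          + ((Finset.range m).image (fun i => (g i)⁻¹)).card := Finset.card_union_le _ _
      _ ≤ (({1} : Finset G).card + ((Finset.range m).image g).card)
          + ((Finset.range m).image (fun i => (g i)⁻¹)).card :=
            Nat.add_le_add_right (Finset.card_union_le _ _) _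
      _ ≤ (1 + m) + m := by
          refine Nat.add_le_add (Nat.add_le_add ?_ ?_) ?_
          · simp
          · exact le_trans Finset.card_image_le (by simp)
          · exact le_trans Finset.card_image_le (by simp)
      _ ≤ 2 * m + 1 := by omega
  have hgT : ∀ i < m, g i ∈ T := fun i hi => hHmono hi (hgmem i)
  have hAsubT : (A : Set G) ⊆ (T : Set G) := by
    intro a ha
    simp only [hAdef, Finset.coe_union, Set.mem_union, Finset.coe_image, Finset.coe_singleton,
      Set.mem_singleton_iff, Set.mem_image, Finset.mem_coe, Finset.mem_range] at ha
    rcases ha with (rfl | ⟨i, hi, rfl⟩) | ⟨i, hi, rfl⟩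
    · exact one_mem T
    · exact hgT i hi
    · exact inv_mem (hgT i hi)
  have hmemA : ∀ a : G, a ∈ A ↔ a = 1 ∨ (∃ i < m, g i = a) ∨ ∃ i < m, (g i)⁻¹ = a := by
    intro a
    simp [hAdef, Finset.mem_union, Finset.mem_image, Finset.mem_range, or_assoc]
  have hAinv : (A : Set G)⁻¹ = (A : Set G) := by
    ext a
    simp only [Set.mem_inv, Finset.mem_coe, hmemA]
    constructor
    · rintro (h | ⟨i, hi, h⟩ | ⟨i, hi, h⟩)
      · left; rw [← inv_inv a, h, inv_one]
      · right; right; exact ⟨i, hi, by rw [h, inv_inv]⟩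
      · right; left; exact ⟨i, hi, by rw [← inv_inv (g i), h, inv_inv]⟩
    · rintro (rfl | ⟨i, hi, rfl⟩ | ⟨i, hi, rfl⟩)
      · left; exact inv_one
      · right; right; exact ⟨i, hi, rfl⟩
      · right; left; exact ⟨i, hi, by rw [inv_inv]⟩
  have h1A : (1 : G) ∈ A := (hmemA 1).2 (Or.inl rfl)
  -- the neighborhood S
  set S : Set G := (A : Set G) * (Nc : Set G) with hSdef
  have hNS : (Nc : Set G) ⊆ S := fun ν hν => ⟨1, h1A, ν, hν, one_mul ν⟩
  have hS1 : (1 : G) ∈ S := hNS (one_mem Nc)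
  have hgS : ∀ i < m, g i ∈ S := fun i hi =>
    ⟨g i, (hmemA _).2 (Or.inr (Or.inl ⟨i, hi, rfl⟩)), 1, one_mem Nc, mul_one _⟩
  have hScompact : IsCompact S := A.finite_toSet.isCompact.mul hNccompact
  have hSnhds : S ∈ nhds (1 : G) :=
    Filter.mem_of_superset (hNcopen.mem_nhds (one_mem Nc)) hNS
  -- N commutes with A (as sets)
  have hswap : (Nc : Set G) * (A : Set G) = (A : Set G) * (Nc : Set G) := by
    ext z
    constructor
    · rintro ⟨ν, hν, a, ha, rfl⟩
      have haT : a ∈ T := hAsubT ha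
      have : a⁻¹ * ν * (a⁻¹)⁻¹ ∈ Nc := hNcconj a⁻¹ (inv_mem haT) ν hν
      rw [inv_inv] at this
      exact ⟨a, ha, a⁻¹ * ν * a, this, by group⟩
    · rintro ⟨a, ha, ν, hν, rfl⟩
      have haT : a ∈ T := hAsubT ha
      exact ⟨a * ν * a⁻¹, hNcconj a haT ν hν, a, ha, by group⟩
  have hNN : (Nc : Set G) * (Nc : Set G) = (Nc : Set G) := by
    apply Set.Subset.antisymm
    · rintro z ⟨ν, hν, ν', hν', rfl⟩
      exact mul_mem hν hν'
    · intro z hz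
      exact ⟨z, hz, 1, one_mem Nc, mul_one z⟩
  have hSsymm : S = S⁻¹ := by
    rw [hSdef, mul_inv_rev, inv_coe_set, hAinv, hswap]
  -- powers of S are covered by few cosets
  have hpow : ∀ k : ℕ, S ^ (k + 1) ⊆ ↑(A ^ (k + 1)) * (Nc : Set G) := by
    intro k
    induction k with
    | zero => simp [hSdef]
    | succ k ih =>
      calc S ^ (k + 2) = S ^ (k + 1) * S := by rw [pow_succ]
        _ ⊆ (↑(A ^ (k + 1)) * (Nc : Set G)) * ((A : Set G) * (Nc : Set G)) :=
            Set.mul_subset_mul ih Set.Subset.rfl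
        _ = ↑(A ^ (k + 1)) * ((Nc : Set G) * (A : Set G)) * (Nc : Set G) := by
            rw [mul_assoc, mul_assoc, mul_assoc]
        _ = ↑(A ^ (k + 1)) * ((A : Set G) * (Nc : Set G)) * (Nc : Set G) := by rw [hswap]
        _ = (↑(A ^ (k + 1)) * (A : Set G)) * ((Nc : Set G) * (Nc : Set G)) := by
            rw [mul_assoc, mul_assoc, mul_assoc]
        _ = ↑(A ^ (k + 2)) * (Nc : Set G) := by
            rw [hNN, ← Finset.coe_mul, ← pow_succ]
  refine ⟨S, hScompact, hSsymm, hSnhds, ?_⟩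
  intro hcon
  -- all powers of S collapse into S ^ n
  have hstep2 : ∀ j : ℕ, S ^ j ⊆ S ^ (j + 1) := by
    intro j x hx
    have : x * 1 ∈ S ^ j * S := Set.mul_mem_mul hx hS1
    rw [mul_one] at this
    rwa [pow_succ]
  have hmono2 : ∀ j k : ℕ, j ≤ k → S ^ j ⊆ S ^ k := by
    intro j k h
    induction h with
    | refl => exact Set.Subset.rfl
    | step h ih => exact ih.trans (hstep2 _)
  have hcollapse : ∀ k : ℕ, n ≤ k → S ^ k ⊆ S ^ n := by
    intro k hk
    induction k, hk using Nat.le_induction with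
    | base => exact Set.Subset.rfl
    | succ k hk ih =>
      calc S ^ (k + 1) = S ^ k * S := pow_succ S k
        _ ⊆ S ^ n * S := Set.mul_subset_mul_right ih
        _ = S ^ (n + 1) := (pow_succ S n).symm
        _ = S ^ n := hcon.symm
  have hall : ∀ k : ℕ, S ^ (k + 1) ⊆ S ^ n := by
    intro k
    rcases le_or_gt (k + 1) n with h | h
    · exact hmono2 _ _ h
    · exact hcollapse (k + 1) (Nat.le_of_lt_succ (Nat.lt_succ_of_lt h))
  -- the subgroup of all powers
  set U : Subgroup G :=
    { carrier := ⋃ k : ℕ, S ^ (k + 1)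
      one_mem' := Set.mem_iUnion.2 ⟨0, by simpa using hS1⟩
      mul_mem' := by
        rintro a b ha hb
        obtain ⟨i, hi⟩ := Set.mem_iUnion.1 ha
        obtain ⟨j, hj⟩ := Set.mem_iUnion.1 hb
        refine Set.mem_iUnion.2 ⟨i + j + 1, ?_⟩
        have : a * b ∈ S ^ (i + 1) * S ^ (j + 1) := Set.mul_mem_mul hi hj
        rwa [← pow_add, show i + 1 + (j + 1) = i + j + 1 + 1 by omega] at this
      inv_mem' := by
        intro a ha
        obtain ⟨i, hi⟩ := Set.mem_iUnion.1 ha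
        refine Set.mem_iUnion.2 ⟨i, ?_⟩
        have : a⁻¹ ∈ (S ^ (i + 1))⁻¹ := Set.inv_mem_inv.2 hi
        rwa [← inv_pow, ← hSsymm] at this } with hUdef
  have hUsub : (U : Set G) ⊆ S ^ n := Set.iUnion_subset hall
  -- the chain of subgroups between N and U
  set Ls : ℕ → Subgroup G := fun i =>
    Subgroup.closure ((Nc : Set G) ∪ g '' {j | j < i}) with hLsdef
  have hNLs : ∀ i, Nc ≤ Ls i := fun i y hy =>
    Subgroup.subset_closure (Or.inl hy)
  have hLmono : ∀ i, Ls i ≤ Ls (i + 1) := fun i =>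
    Subgroup.closure_mono (Set.union_subset_union_right _
      (Set.image_mono fun j (hj : j < i) => Nat.lt_succ_of_lt hj))
  have hLleH : ∀ i, Ls i ≤ Hs i := by
    intro i
    rw [hLsdef]
    apply (Subgroup.closure_le _).2
    apply Set.union_subset
    · exact fun y hy => (hHmono (Nat.zero_le i)) (hNcle hy)
    · rintro y ⟨j, hj, rfl⟩
      exact hHmono (Nat.succ_le_of_lt hj) (hgmem j)
  have hgLs : ∀ i, g i ∈ Ls (i + 1) := fun i =>
    Subgroup.subset_closure (Or.inr ⟨i, Nat.lt_succ_self i, rfl⟩)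
  have hgLsnot : ∀ i, g i ∉ Ls i := fun i hmem => hgnot i (hLleH i hmem)
  have hLsU : Ls m ≤ U := by
    rw [hLsdef]
    apply (Subgroup.closure_le _).2
    apply Set.union_subset
    · intro y hy
      exact Set.mem_iUnion.2 ⟨0, by simpa using hNS hy⟩
    · rintro y ⟨j, hj, rfl⟩
      exact Set.mem_iUnion.2 ⟨0, by simpa using hgS j hj⟩
  -- the counting lower bound
  have hcount : ∀ i : ℕ, ∀ B : Finset G, (Ls i : Set G) ⊆ ↑B * (Nc : Set G) →
      2 ^ i ≤ B.card := by
    intro i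
    induction i with
    | zero =>
      intro B hB
      obtain ⟨b, hb, ν, hν, h1⟩ := hB (one_mem (Ls 0))
      rw [pow_zero]
      exact Finset.card_pos.2 ⟨b, hb⟩
    | succ i ih =>
      intro B hB
      have := cover_card_step Nc (Ls i) (Ls (i + 1)) (g i) (hNLs i) (hLmono i)
        (hgLs i) (hgLsnot i) (2 ^ i) ih B hB
      calc 2 ^ (i + 1) = 2 * 2 ^ i := by ring
        _ ≤ B.card := this
  -- deriving the contradiction
  obtain ⟨n', rfl⟩ : ∃ n', n = n' + 1 := ⟨n - 1, (Nat.succ_pred_eq_of_pos hn).symm⟩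
  have hLsSn : (Ls m : Set G) ⊆ ↑(A ^ (n' + 1)) * (Nc : Set G) := by
    intro x hx
    exact hpow n' (hUsub (hLsU hx))
  have hfinal : 2 ^ m ≤ (A ^ (n' + 1)).card := hcount m _ hLsSn
  have hAle : (A ^ (n' + 1)).card ≤ (2 * m + 1) ^ (n' + 1) :=
    le_trans Finset.card_pow_le (Nat.pow_le_pow_left hAcard _)
  omega

end PoissonSystems
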